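/- Let h₂ ∈ ℂ^n be nonzero, w₁, w₂ unit vectors, η₂₂ = |⟨w₂, h₂⟩|²/‖h₂‖² with ⟨w₂, h₂/‖h₂‖⟩ real nonnegative and 0 < η₂₂ ≤ 1. Then | |⟨w₁, h₂⟩|² − ‖h₂‖²·|⟨w₂, w₁⟩|² | ≤ 2‖h₂‖²·√(2 − 2η₂₂). -/

import Mathlib

open scoped ComplexInnerProductSpace

theorem stmt_16 {n : ℕ} (h₂ w₁ w₂ : EuclideanSpace ℂ (Fin n))
    (hh₂ : h₂ ≠ 0) (hw₁ : ‖w₁‖ = 1) (hw₂ : ‖w₂‖ = 1)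
    (η₂₂ : ℝ) (hη : η₂₂ = ‖⟪w₂, h₂⟫‖ ^ 2 / ‖h₂‖ ^ 2)
    (him : (⟪w₂, (‖h₂‖ : ℂ)⁻¹ • h₂⟫).im = 0)
    (hre : 0 ≤ (⟪w₂, (‖h₂‖ : ℂ)⁻¹ • h₂⟫).re)
    (hηpos : 0 < η₂₂) (hηle : η₂₂ ≤ 1) :
    |‖⟪w₁, h₂⟫‖ ^ 2 - ‖h₂‖ ^ 2 * ‖⟪w₂, w₁⟫‖ ^ 2| ≤
      2 * ‖h₂‖ ^ 2 * Real.sqrt (2 - 2 * η₂₂) := by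
  set u : EuclideanSpace ℂ (Fin n) := (‖h₂‖ : ℂ)⁻¹ • h₂ with hu
  have hn : (0:ℝ) < ‖h₂‖ := norm_pos_iff.mpr hh₂
  have hnne : (‖h₂‖ : ℂ) ≠ 0 := by exact_mod_cast hn.ne'
  have hunorm : ‖u‖ = 1 := by
    rw [hu, norm_smul]
    simp [norm_inv, abs_of_pos hn]
    field_simp
  -- inner w₂ u is real nonneg, value sqrt η₂₂
  have hr : ⟪w₂, u⟫ = (Real.sqrt η₂₂ : ℂ) := by
    have h1 : ⟪w₂, u⟫ = ((⟪w₂, u⟫).re : ℂ) := by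
      have := Complex.re_add_im ⟪w₂, u⟫
      rw [him] at this
      simpa using this.symm
    have h2 : ‖⟪w₂, u⟫‖ = (⟪w₂, u⟫).re := by
      rw [h1, Complex.norm_real, Real.norm_eq_abs, abs_of_nonneg hre, Complex.ofReal_re]
    have h3 : ‖⟪w₂, u⟫‖ ^ 2 = η₂₂ := by
      rw [hu, inner_smul_right]
      rw [hη]
      simp [norm_mul, hnne]
      rw [mul_pow]
      field_simp
    have : (⟪w₂, u⟫).re = Real.sqrt η₂₂ := by
      rw [← h3, h2, Real.sqrt_sq hre]
    rw [h1, this]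
  -- ‖u - w₂‖ ≤ sqrt (2 - 2 η₂₂)
  have hle1 : ‖u - w₂‖ ≤ Real.sqrt (2 - 2 * η₂₂) := by
    have hsq : ‖u - w₂‖ ^ 2 = 2 - 2 * Real.sqrt η₂₂ := by
      have hiu : ⟪u, w₂⟫ = (Real.sqrt η₂₂ : ℂ) := by
        rw [← inner_conj_symm, hr]; simp
      rw [@norm_sub_sq ℂ _ _ _ _ u w₂, hiu, hunorm, hw₂]
      simp
      ring
    have hmono : 2 - 2 * Real.sqrt η₂₂ ≤ 2 - 2 * η₂₂ := by
      have : η₂₂ ≤ Real.sqrt η₂₂ := by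
        nlinarith [Real.sq_sqrt hηpos.le, Real.sqrt_nonneg η₂₂]
      linarith
    calc ‖u - w₂‖ = Real.sqrt (‖u - w₂‖ ^ 2) := by
          rw [Real.sqrt_sq (norm_nonneg _)]
      _ ≤ Real.sqrt (2 - 2 * η₂₂) := by
          rw [hsq]; exact Real.sqrt_le_sqrt hmono
  -- a, b
  set a := ‖⟪w₁, u⟫‖ with ha
  set b := ‖⟪w₂, w₁⟫‖ with hb
  have ha1 : a ≤ 1 := by
    have := norm_inner_le_norm (𝕜 := ℂ) w₁ u
    rw [hw₁, hunorm] at this; simpa using this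
  have hb1 : b ≤ 1 := by
    have := norm_inner_le_norm (𝕜 := ℂ) w₂ w₁
    rw [hw₁, hw₂] at this; simpa using this
  have hab : |a - b| ≤ ‖u - w₂‖ := by
    have h1 : ‖⟪w₁, u - w₂⟫‖ ≤ ‖u - w₂‖ := by
      have := norm_inner_le_norm (𝕜 := ℂ) w₁ (u - w₂)
      rw [hw₁] at this; simpa only [one_mul] using this
    have h2 : ⟪w₁, u - w₂⟫ = ⟪w₁, u⟫ - ⟪w₁, w₂⟫ := inner_sub_right _ _ _
    have hbw : b = ‖⟪w₁, w₂⟫‖ := by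
      rw [hb]; exact norm_inner_symm w₂ w₁
    rw [abs_sub_le_iff]
    constructor
    · calc a - b = ‖⟪w₁, u⟫‖ - ‖⟪w₁, w₂⟫‖ := by rw [ha, hbw]
        _ ≤ ‖⟪w₁, u⟫ - ⟪w₁, w₂⟫‖ := norm_sub_norm_le _ _
        _ = ‖⟪w₁, u - w₂⟫‖ := by rw [h2]
        _ ≤ ‖u - w₂‖ := h1
    · calc b - a = ‖⟪w₁, w₂⟫‖ - ‖⟪w₁, u⟫‖ := by rw [ha, hbw]
        _ ≤ ‖⟪w₁, w₂⟫ - ⟪w₁, u⟫‖ := norm_sub_norm_le _ _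
        _ = ‖⟪w₁, u - w₂⟫‖ := by rw [h2]; rw [norm_sub_rev]
        _ ≤ ‖u - w₂‖ := h1
  -- rewrite LHS
  have hw1h : ‖⟪w₁, h₂⟫‖ = ‖h₂‖ * a := by
    have : h₂ = (‖h₂‖ : ℂ) • u := by
      rw [hu, smul_smul, mul_inv_cancel₀ hnne, one_smul]
    rw [ha]
    conv_lhs => rw [this]
    rw [inner_smul_right]
    simp [norm_mul]
  have key : |a ^ 2 - b ^ 2| ≤ 2 * Real.sqrt (2 - 2 * η₂₂) := by
    have h0a : 0 ≤ a := norm_nonneg _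
    have h0b : 0 ≤ b := norm_nonneg _
    have : |a ^ 2 - b ^ 2| = |a - b| * (a + b) := by
      rw [← abs_of_nonneg (by linarith : (0:ℝ) ≤ a + b), ← abs_mul]
      ring_nf
    rw [this]
    calc |a - b| * (a + b) ≤ ‖u - w₂‖ * 2 := by
          apply mul_le_mul hab (by linarith) (by linarith) (norm_nonneg _)
      _ ≤ Real.sqrt (2 - 2 * η₂₂) * 2 := by
          apply mul_le_mul_of_nonneg_right hle1 (by norm_num)
      _ = 2 * Real.sqrt (2 - 2 * η₂₂) := by ring
  have hrw : ‖⟪w₁, h₂⟫‖ ^ 2 - ‖h₂‖ ^ 2 * ‖⟪w₂, w₁⟫‖ ^ 2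
      = ‖h₂‖ ^ 2 * (a ^ 2 - b ^ 2) := by
    rw [hw1h, ← hb]; ring
  rw [hrw, abs_mul, abs_of_nonneg (by positivity : (0:ℝ) ≤ ‖h₂‖ ^ 2)]
  calc ‖h₂‖ ^ 2 * |a ^ 2 - b ^ 2| ≤ ‖h₂‖ ^ 2 * (2 * Real.sqrt (2 - 2 * η₂₂)) :=
        mul_le_mul_of_nonneg_left key (by positivity)
    _ = 2 * ‖h₂‖ ^ 2 * Real.sqrt (2 - 2 * η₂₂) := by ring
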